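/- Let c ∈ ℕ and let the weighted system (N,R,wt,K) be c-closed. For every l ∈ ℕ, every D ⊆ T_R^{(c)}, and every D' ⊆ T_R \ T_R^{(c)} the following holds: if ⋃_{d∈D'}(cotrees(d) ∩ T_R^{(c)}) ⊆ D, then for every B ⊆ D' with |B| = l: ⊕_{d∈D} wt(d)_K ⊕ Σ_{d∈D'} wt(d)_K = ⊕_{d∈D} wt(d)_K ⊕ Σ_{d∈D'∖B} wt(d)_K (here D is finite since T_R^{(c)} is finite, and D' is countable since T_R is countable). -/

import Mathlib

open scoped Classical

/-- Trees over a ranked set `R` with arity function `ar`: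
`RT.node r ts` is a tree whose root is labelled `r` and which has `ar r` children. -/
inductive RT (R : Type) (ar : R → ℕ) : Type
  | node (r : R) (children : Fin (ar r) → RT R ar)

namespace RT

variable {R : Type} {ar : R → ℕ}

/-- The rule labelling the root of a tree. -/
def rootRule : RT R ar → R
  | node r _ => r

/-- The subtree at a position (`none` if the position is not a position of the tree). -/
def subAt : RT R ar → List ℕ → Option (RT R ar)
  | t, [] => some t
  | node r ts, i :: p => if h : i < ar r then subAt (ts ⟨i, h⟩) p else none

/-- Replace the subtree at a position by another tree. -/
def replaceAt : RT R ar → List ℕ → RT R ar → RT R ar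
  | _, [], s => s
  | node r ts, i :: p, s => node r fun j => if j.1 = i then replaceAt (ts j) p s else ts j

/-- The sequence of rule labels from the root to a position, inclusive. -/
def seqTo : RT R ar → List ℕ → Option (List R)
  | node r _, [] => some [r]
  | node r ts, i :: p => if h : i < ar r then (seqTo (ts ⟨i, h⟩) p).map (fun l => r :: l) else none

/-- `p` is a leaf position of `d`, i.e. a valid position with no child positions. -/
def LeafAt (d : RT R ar) (p : List ℕ) : Prop :=
  ∃ t, subAt d p = some t ∧ ar t.rootRule = 0

/-- The height of a tree: `0` on nullary nodes, otherwise `1` plus the maximum height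
of the direct subtrees. -/
def height : RT R ar → ℕ
  | node _ ts => Finset.univ.sup fun i => height (ts i) + 1

end RT

/-- The weight of a tree: evaluate it bottom-up, interpreting each rule `r` by the
operation `wt r`. -/
def wtval {K R : Type} {ar : R → ℕ} (wt : ∀ r : R, (Fin (ar r) → K) → K) : RT R ar → K
  | .node r ts => wt r fun i => wtval wt (ts i)

section Cyclicity

variable {R : Type} {ar : R → ℕ}

/-- A string over `R` is an elementary cycle if it has length `> 1`, its first and last
symbols coincide, and it becomes repetition-free after deleting its last (resp. first)
symbol. -/
def ElementaryCycle (w : List R) : Prop :=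
  1 < w.length ∧ w.head? = w.getLast? ∧ w.dropLast.Nodup ∧ w.tail.Nodup

/-- `ρ` is `(c,w)`-cyclic: `ρ = v₀ w v₁ ⋯ w v_c` (with `c` occurrences of the elementary
cycle `w`) where `w` is not an infix of any `vᵢ`. -/
def CWCyclic (c : ℕ) (w ρ : List R) : Prop :=
  ElementaryCycle w ∧
  ∃ v : ℕ → List R,
    ρ = v 0 ++ (((List.range c).map fun i => w ++ v (i + 1)).flatten) ∧
    ∀ i ≤ c, ¬ w <:+: v i

/-- `ρ` is `c`-cyclic: it is `(c,w)`-cyclic for some elementary cycle `w` and not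
`(c',w')`-cyclic for any `c' > c` and elementary cycle `w'`. -/
def CCyclic (c : ℕ) (ρ : List R) : Prop :=
  (∃ w, CWCyclic c w ρ) ∧ ∀ c', c < c' → ∀ w', ¬ CWCyclic c' w' ρ

/-- The leaf position `p` of `d` is `(c,w)`-cyclic. -/
def LeafCW (c : ℕ) (w : List R) (d : RT R ar) (p : List ℕ) : Prop :=
  RT.LeafAt d p ∧ ∃ ρ, RT.seqTo d p = some ρ ∧ CWCyclic c w ρ

/-- The leaf position `p` of `d` is `c`-cyclic. -/
def LeafC (c : ℕ) (d : RT R ar) (p : List ℕ) : Prop :=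
  RT.LeafAt d p ∧ ∃ ρ, RT.seqTo d p = some ρ ∧ CCyclic c ρ

/-- The tree `d` is `c`-cyclic: some leaf of `d` is `c`-cyclic and no leaf of `d` is
`c'`-cyclic for any `c' > c`. -/
def TreeC (c : ℕ) (d : RT R ar) : Prop :=
  (∃ p, LeafC c d p) ∧ ∀ c', c < c' → ∀ p, ¬ LeafC c' d p

/-- `d ⊢_w d'` : there are positions `p ≤ p'` of `d` whose connecting label sequence is
`w`, and `d'` is obtained by replacing the subtree at `p` by the subtree at `p'`.
(The position `p'` is `p ++ q`.) -/
def CutW (w : List R) (d d' : RT R ar) : Prop :=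
  ∃ p q t s, RT.subAt d p = some t ∧ RT.subAt t q = some s ∧
    RT.seqTo t q = some w ∧ d' = RT.replaceAt d p s

/-- `d ⊢ d'` : `d ⊢_w d'` for some elementary cycle `w`. -/
def Cut (d d' : RT R ar) : Prop := ∃ w, ElementaryCycle w ∧ CutW w d d'

/-- The set of `w`-cutout trees of `d`. -/
def cotreesW (w : List R) (d : RT R ar) : Set (RT R ar) := {d' | Relation.TransGen (CutW w) d d'}

/-- The set of cutout trees of `d`. -/
def cotrees (d : RT R ar) : Set (RT R ar) := {d' | Relation.TransGen Cut d d'}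

end Cyclicity

section Rules

variable {N R : Type}

/-- Well-sorted trees over a rule system given by `lhs` and `rhs`: at each node labelled
`r`, the `i`-th child is a well-sorted tree whose root label has left-hand side equal to
the `i`-th nonterminal of `rhs r`. -/
inductive WellSorted (lhs : R → N) (rhs : R → List N) :
    RT R (fun r => (rhs r).length) → Prop
  | node (r : R) (ts : Fin (rhs r).length → RT R fun r => (rhs r).length)
      (hsort : ∀ i, lhs (ts i).rootRule = (rhs r).get i)
      (hrec : ∀ i, WellSorted lhs rhs (ts i)) : WellSorted lhs rhs (RT.node r ts)

/-- `T_R` : the set of (well-sorted) trees over the rule system. -/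
def TRset (lhs : R → N) (rhs : R → List N) : Set (RT R fun r => (rhs r).length) :=
  {d | WellSorted lhs rhs d}

/-- `(T_R)_A` : the set of trees of sort `A`. -/
def TRA (lhs : R → N) (rhs : R → List N) (A : N) : Set (RT R fun r => (rhs r).length) :=
  {d | WellSorted lhs rhs d ∧ lhs d.rootRule = A}

/-- `T_R^{(c)}` : the set of trees that are `c'`-cyclic for some `c' ≤ c`. -/
def TRcset (lhs : R → N) (rhs : R → List N) (c : ℕ) : Set (RT R fun r => (rhs r).length) :=
  {d | WellSorted lhs rhs d ∧ ∃ c' ≤ c, TreeC c' d}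

end Rules

/-- An infinitary sum operation on a commutative monoid `K`, turning it into a complete
monoid: the sum of the empty family is `0`, the sum of a singleton family is its member,
the sum of a two-element family is the binary sum, and the partition law holds (every
partition of a countable index set `I` into sets indexed by `J` is given by the fibers
of a map `g : I → J`). -/
structure InfSum (K : Type) [AddCommMonoid K] where
  isum : ∀ {I : Type} [Countable I], (I → K) → K
  isum_empty : ∀ {I : Type} [Countable I] (f : I → K), IsEmpty I → isum f = 0
  isum_single : ∀ {I : Type} [Countable I] (f : I → K) (j : I), (∀ i, i = j) → isum f = f j
  isum_pair : ∀ {I : Type} [Countable I] (f : I → K) (j j' : I), j ≠ j' →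
    (∀ i, i = j ∨ i = j') → isum f = f j + f j'
  isum_partition : ∀ {I J : Type} [Countable I] [Countable J] (f : I → K) (g : I → J),
    isum f = isum fun j : J => isum fun i : {i : I // g i = j} => f i.1

section MMonoid

variable {K : Type} [AddCommMonoid K]

/-- A complete monoid is d-complete if, whenever all the partial sums `Σ_{i ≤ n} f i`
eventually equal `k`, the infinitary sum of the family equals `k`. -/
def InfSum.DComplete (S : InfSum K) : Prop :=
  ∀ (k : K) (f : ℕ → K),
    (∃ n₀ : ℕ, ∀ n, n₀ ≤ n → (∑ i ∈ Finset.range (n + 1), f i) = k) → S.isum f = k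

/-- A complete monoid is completely idempotent if the infinitary sum of every constant
family over a nonempty countable index set is that constant. -/
def InfSum.CompletelyIdempotent (S : InfSum K) : Prop :=
  ∀ (I : Type) [Countable I], Nonempty I → ∀ k : K, S.isum (fun _ : I => k) = k

/-- The family `Ω` of operation sets contains all the null (constantly `0`) operations. -/
def HasZeroOps (Ω : ∀ n : ℕ, Set ((Fin n → K) → K)) : Prop :=
  ∀ n : ℕ, (fun _ : Fin n → K => (0 : K)) ∈ Ω n

/-- Distributivity of an M-monoid: every operation in `Ω` distributes over `+` in each
argument, and `0` is absorbing for every operation in `Ω`. -/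
def DistributiveOps (Ω : ∀ n : ℕ, Set ((Fin n → K) → K)) : Prop :=
  ∀ n : ℕ, ∀ ω ∈ Ω n,
    (∀ (x : Fin n → K) (i : Fin n) (a b : K),
      ω (Function.update x i (a + b)) = ω (Function.update x i a) + ω (Function.update x i b)) ∧
    (∀ x : Fin n → K, (∃ i, x i = 0) → ω x = 0)

end MMonoid

/-- The weighted system `(N, R, wt, K)` is `c`-closed: for every well-sorted tree `d` and
elementary cycle `w` such that some leaf position of `d` is `(c+1,w)`-cyclic, the weight
of `d` is subsumed by the (finite) `⊕`-sum of the weights of the `w`-cutout trees of `d`. -/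
def CClosed {K : Type} [AddCommMonoid K] {N R : Type} (lhs : R → N) (rhs : R → List N)
    (wt : ∀ r : R, (Fin (rhs r).length → K) → K) (c : ℕ) : Prop :=
  ∀ d : RT R (fun r => (rhs r).length), WellSorted lhs rhs d →
    ∀ w : List R, ElementaryCycle w → (∃ p, LeafCW (c + 1) w d p) →
      (wtval wt d + ∑ᶠ d' ∈ cotreesW w d, wtval wt d') = ∑ᶠ d' ∈ cotreesW w d, wtval wt d'

/-! ### Auxiliary lemmas: basic tree facts -/

section AuxRT

namespace RT

variable {R : Type} {ar : R → ℕ}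

/-- Size of a tree. -/
def size : RT R ar → ℕ
  | node _ ts => 1 + ∑ i, size (ts i)

lemma size_node (r : R) (ts : Fin (ar r) → RT R ar) :
    size (node r ts) = 1 + ∑ i, size (ts i) := rfl

lemma one_le_size (d : RT R ar) : 1 ≤ d.size := by
  cases d with
  | node r ts => rw [size_node]; omega

lemma size_child {r : R} (ts : Fin (ar r) → RT R ar) (i : Fin (ar r)) :
    size (ts i) < size (node r ts) := by
  have h : size (ts i) ≤ ∑ j, size (ts j) :=
    Finset.single_le_sum (f := fun j => size (ts j)) (fun j _ => Nat.zero_le _)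
      (Finset.mem_univ i)
  rw [size_node]; omega

@[simp] lemma subAt_nil (d : RT R ar) : subAt d [] = some d := by
  cases d <;> rfl

lemma subAt_cons (r : R) (ts : Fin (ar r) → RT R ar) (i : ℕ) (p : List ℕ) :
    subAt (node r ts) (i :: p) = if h : i < ar r then subAt (ts ⟨i, h⟩) p else none := rfl

lemma subAt_append (d : RT R ar) (p q : List ℕ) :
    subAt d (p ++ q) = (subAt d p).bind (fun t => subAt t q) := by
  induction p generalizing d with
  | nil => simp
  | cons i p ih =>
      cases d with
      | node r ts =>
          by_cases h : i < ar r
          · simp [subAt_cons, h, ih]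
          · simp [subAt_cons, h]

lemma size_le_of_subAt : ∀ {p : List ℕ} {d t : RT R ar}, subAt d p = some t → size t ≤ size d := by
  intro p
  induction p with
  | nil => intro d t h; simp at h; subst h; exact le_refl _
  | cons i p ih =>
      intro d t h
      cases d with
      | node r ts =>
          rw [subAt_cons] at h
          split at h
          · exact le_trans (ih h) (le_of_lt (size_child ts _))
          · exact absurd h (by simp)

lemma size_lt_of_subAt : ∀ {p : List ℕ} {d t : RT R ar}, subAt d p = some t → p ≠ [] →
    size t < size d := by
  intro p
  induction p with
  | nil => intro d t h hne; exact absurd rfl hne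
  | cons i p ih =>
      intro d t h _
      cases d with
      | node r ts =>
          rw [subAt_cons] at h
          split at h
          · exact lt_of_le_of_lt (size_le_of_subAt h) (size_child ts _)
          · exact absurd h (by simp)

@[simp] lemma replaceAt_nil (d x : RT R ar) : replaceAt d [] x = x := by
  cases d <;> rfl

lemma replaceAt_cons (r : R) (ts : Fin (ar r) → RT R ar) (i : ℕ) (p : List ℕ) (x : RT R ar) :
    replaceAt (node r ts) (i :: p) x
      = node r fun j => if j.1 = i then replaceAt (ts j) p x else ts j := rfl

lemma size_replaceAt : ∀ {p : List ℕ} {d t : RT R ar} (x : RT R ar), subAt d p = some t →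
    size (replaceAt d p x) + size t = size d + size x := by
  intro p
  induction p with
  | nil => intro d t x h; simp at h; subst h; simp [Nat.add_comm]
  | cons i p ih =>
      intro d t x h
      cases d with
      | node r ts =>
          rw [subAt_cons] at h
          split at h
          · rename_i hlt
            rw [replaceAt_cons, size_node, size_node]
            have hfun : (fun j => size (if j.1 = i then replaceAt (ts j) p x else ts j))
                = Function.update (fun j => size (ts j)) ⟨i, hlt⟩
                    (size (replaceAt (ts ⟨i, hlt⟩) p x)) := by
              funext j
              by_cases hj : j = ⟨i, hlt⟩
              · subst hj; simp
              · have : ¬ (j.1 = i) := fun hc => hj (Fin.ext hc)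
                simp [this, Function.update_of_ne hj]
            have h1 : ∑ j, size (if j.1 = i then replaceAt (ts j) p x else ts j)
                = size (replaceAt (ts ⟨i, hlt⟩) p x)
                  + ∑ j ∈ Finset.univ \ {(⟨i, hlt⟩ : Fin (ar r))}, size (ts j) := by
              rw [show (∑ j, size (if j.1 = i then replaceAt (ts j) p x else ts j))
                  = ∑ j, Function.update (fun j => size (ts j)) ⟨i, hlt⟩
                      (size (replaceAt (ts ⟨i, hlt⟩) p x)) j from by rw [← hfun]]
              rw [Finset.sum_update_of_mem (Finset.mem_univ _)]
            have h2 : ∑ j, size (ts j)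
                = ∑ j ∈ Finset.univ \ {(⟨i, hlt⟩ : Fin (ar r))}, size (ts j)
                  + size (ts ⟨i, hlt⟩) :=
              Finset.sum_eq_sum_sdiff_singleton_add (Finset.mem_univ _) _
            have h3 := ih x h
            omega
          · exact absurd h (by simp)

end RT

end AuxRT
section AuxRT2

namespace RT

variable {R : Type} {ar : R → ℕ}

lemma seqTo_nil (r : R) (ts : Fin (ar r) → RT R ar) : seqTo (node r ts) [] = some [r] := rfl

lemma seqTo_cons (r : R) (ts : Fin (ar r) → RT R ar) (i : ℕ) (p : List ℕ) :
    seqTo (node r ts) (i :: p)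
      = if h : i < ar r then (seqTo (ts ⟨i, h⟩) p).map (fun l => r :: l) else none := rfl

lemma seqTo_length : ∀ {p : List ℕ} {d : RT R ar} {ρ : List R},
    seqTo d p = some ρ → ρ.length = p.length + 1 := by
  intro p
  induction p with
  | nil =>
      intro d ρ h
      cases d with
      | node r ts => rw [seqTo_nil] at h; cases h; rfl
  | cons i p ih =>
      intro d ρ h
      cases d with
      | node r ts =>
          rw [seqTo_cons] at h
          split at h
          · rcases Option.map_eq_some_iff.mp h with ⟨l, hl, rfl⟩
            simp [ih hl]
          · exact absurd h (by simp)

lemma seqTo_head : ∀ {p : List ℕ} {d : RT R ar} {ρ : List R},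
    seqTo d p = some ρ → ∃ l, ρ = rootRule d :: l := by
  intro p
  induction p with
  | nil =>
      intro d ρ h
      cases d with
      | node r ts => rw [seqTo_nil] at h; cases h; exact ⟨[], rfl⟩
  | cons i p ih =>
      intro d ρ h
      cases d with
      | node r ts =>
          rw [seqTo_cons] at h
          split at h
          · rcases Option.map_eq_some_iff.mp h with ⟨l, _, rfl⟩
            exact ⟨l, rfl⟩
          · exact absurd h (by simp)

lemma seqTo_getLast : ∀ {q : List ℕ} {t : RT R ar} {w : List R},
    seqTo t q = some w → ∃ s, subAt t q = some s ∧ w.getLast? = some (rootRule s) := by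
  intro q
  induction q with
  | nil =>
      intro t w h
      cases t with
      | node r ts =>
          rw [seqTo_nil] at h; cases h
          exact ⟨node r ts, by simp, rfl⟩
  | cons i q ih =>
      intro t w h
      cases t with
      | node r ts =>
          rw [seqTo_cons] at h
          split at h
          · rename_i hlt
            rcases Option.map_eq_some_iff.mp h with ⟨l, hl, rfl⟩
            rcases ih hl with ⟨s, hs1, hs2⟩
            refine ⟨s, by rw [subAt_cons, dif_pos hlt]; exact hs1, ?_⟩
            have hne : l ≠ [] := by
              intro hc; subst hc
              have := seqTo_length hl
              simp at this
            cases l with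
            | nil => exact absurd rfl hne
            | cons a l' => rw [List.getLast?_cons_cons]; exact hs2
          · exact absurd h (by simp)

lemma subpath : ∀ (k : ℕ) {p : List ℕ} {d : RT R ar} {ρ : List R},
    seqTo d p = some ρ → k ≤ p.length →
    ∃ t, subAt d (p.take k) = some t ∧ seqTo t (p.drop k) = some (ρ.drop k) := by
  intro k
  induction k with
  | zero => intro p d ρ h _; exact ⟨d, by simp, by simpa using h⟩
  | succ k ih =>
      intro p d ρ h hk
      cases p with
      | nil => simp at hk
      | cons i p =>
          cases d with
          | node r ts =>
              rw [seqTo_cons] at h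
              split at h
              · rename_i hlt
                rcases Option.map_eq_some_iff.mp h with ⟨l, hl, rfl⟩
                rcases ih hl (by simpa using hk) with ⟨t, ht1, ht2⟩
                refine ⟨t, ?_, ?_⟩
                · rw [List.take_succ_cons, subAt_cons]; simp only [dif_pos hlt]; exact ht1
                · rw [List.drop_succ_cons, List.drop_succ_cons]; exact ht2
              · exact absurd h (by simp)

lemma subAt_replaceAt_self : ∀ {p : List ℕ} {d t : RT R ar} (x : RT R ar),
    subAt d p = some t → subAt (replaceAt d p x) p = some x := by
  intro p
  induction p with
  | nil => intro d t x _; simp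
  | cons i p ih =>
      intro d t x h
      cases d with
      | node r ts =>
          rw [subAt_cons] at h
          split at h
          · rename_i hlt
            rw [replaceAt_cons, subAt_cons]
            simp only [dif_pos hlt]
            have : (⟨i, hlt⟩ : Fin (ar r)).1 = i := rfl
            simp only [this, if_pos]
            exact ih x h
          · exact absurd h (by simp)

lemma replaceAt_append : ∀ {p : List ℕ} {d t : RT R ar} (q : List ℕ) (x : RT R ar),
    subAt d p = some t → replaceAt d (p ++ q) x = replaceAt d p (replaceAt t q x) := by
  intro p
  induction p with
  | nil => intro d t q x h; simp at h; subst h; simp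
  | cons i p ih =>
      intro d t q x h
      cases d with
      | node r ts =>
          rw [subAt_cons] at h
          split at h
          · rename_i hlt
            show replaceAt (node r ts) (i :: (p ++ q)) x = _
            rw [replaceAt_cons, replaceAt_cons]
            congr 1
            funext j
            by_cases hj : j.1 = i
            · have hj' : j = ⟨i, hlt⟩ := Fin.ext hj
              subst hj'
              simp only [if_pos hj]
              exact ih q x h
            · simp only [if_neg hj]
          · exact absurd h (by simp)

lemma rootRule_replaceAt_cons (d : RT R ar) (i : ℕ) (p : List ℕ) (x : RT R ar) :
    rootRule (replaceAt d (i :: p) x) = rootRule d := by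
  cases d <;> rfl

end RT

section WSlem

variable {N R : Type} {lhs : R → N} {rhs : R → List N}

lemma WellSorted.subAt_ws : ∀ {p : List ℕ} {d t : RT R fun r => (rhs r).length},
    WellSorted lhs rhs d → RT.subAt d p = some t → WellSorted lhs rhs t := by
  intro p
  induction p with
  | nil => intro d t hws h; simp at h; subst h; exact hws
  | cons i p ih =>
      intro d t hws h
      cases hws with
      | node r ts hsort hrec =>
          rw [RT.subAt_cons] at h
          split at h
          · exact ih (hrec _) h
          · exact absurd h (by simp)

lemma WellSorted.replaceAt_ws : ∀ {p : List ℕ} {d t x : RT R fun r => (rhs r).length},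
    WellSorted lhs rhs d → RT.subAt d p = some t → WellSorted lhs rhs x →
    lhs x.rootRule = lhs t.rootRule → WellSorted lhs rhs (RT.replaceAt d p x) := by
  intro p
  induction p with
  | nil => intro d t x _ h hx _; simp at h; subst h; simpa using hx
  | cons i p ih =>
      intro d t x hws h hx hlhs
      cases hws with
      | node r ts hsort hrec =>
          rw [RT.subAt_cons] at h
          split at h
          · rename_i hlt
            rw [RT.replaceAt_cons]
            refine WellSorted.node r _ ?_ ?_
            · intro j
              by_cases hj : j.1 = i
              · have hj' : j = ⟨i, hlt⟩ := Fin.ext hj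
                subst hj'
                rw [if_pos hj]
                cases p with
                | nil =>
                    rw [RT.subAt_nil, Option.some.injEq] at h
                    rw [RT.replaceAt_nil, hlhs, ← h]
                    exact hsort _
                | cons a p' =>
                    rw [RT.rootRule_replaceAt_cons]
                    exact hsort _
              · simp only [if_neg hj]; exact hsort j
            · intro j
              by_cases hj : j.1 = i
              · have hj' : j = ⟨i, hlt⟩ := Fin.ext hj
                subst hj'
                rw [if_pos hj]
                exact ih (hrec _) h hx hlhs
              · simp only [if_neg hj]; exact hrec j
          · exact absurd h (by simp)

end WSlem

end AuxRT2
section AuxStrings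

variable {R : Type}

/-- `w` matches `ρ` at position `q`. -/
def MatchAt (w ρ : List R) (q : ℕ) : Prop := (ρ.drop q).take w.length = w

/-- `ρ` has `j` pairwise disjoint occurrences of `w`. -/
def DisjOcc (w ρ : List R) (j : ℕ) : Prop :=
  ∃ qs : List ℕ, qs.length = j ∧ qs.Chain' (fun a b => a + w.length ≤ b) ∧
    ∀ q ∈ qs, MatchAt w ρ q

lemma MatchAt.infix {w ρ : List R} {q : ℕ} (h : MatchAt w ρ q) : w <:+: ρ :=
  (h ▸ (List.take_prefix _ _).isInfix).trans (List.drop_suffix q ρ).isInfix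

lemma MatchAt.le_length {w ρ : List R} {q : ℕ} (hw : 0 < w.length) (h : MatchAt w ρ q) :
    q + w.length ≤ ρ.length := by
  have := congrArg List.length h
  rw [List.length_take, List.length_drop] at this
  omega

lemma infix_exists_matchAt {w ρ : List R} (h : w <:+: ρ) : ∃ q, MatchAt w ρ q := by
  rcases h with ⟨s, t, hst⟩
  refine ⟨s.length, ?_⟩
  unfold MatchAt
  rw [← hst, List.append_assoc, List.drop_left, List.take_left]

lemma matchAt_decomp {w ρ : List R} {q : ℕ} (h : MatchAt w ρ q) :
    ρ = ρ.take q ++ w ++ ρ.drop (q + w.length) := by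
  conv_lhs => rw [← List.take_append_drop q ρ]
  rw [List.append_assoc]
  congr 1
  conv_lhs => rw [← List.take_append_drop w.length (ρ.drop q)]
  rw [h, List.drop_drop]

lemma matchAt_of_prefix {w s ρ : List R} {q : ℕ} (hpre : s <+: ρ)
    (hlen : q + w.length ≤ s.length) (h : MatchAt w s q) : MatchAt w ρ q := by
  rcases hpre with ⟨t, rfl⟩
  unfold MatchAt at h ⊢
  rw [List.drop_append_of_le_length (by omega), List.take_append_of_le_length (by simp; omega)]
  exact h

lemma matchAt_drop {w ρ : List R} {b q : ℕ} (hq : b ≤ q) (h : MatchAt w ρ q) :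
    MatchAt w (ρ.drop b) (q - b) := by
  unfold MatchAt at h ⊢
  rw [List.drop_drop]
  rw [show b + (q - b) = q by omega]
  exact h

lemma matchAt_of_drop {w ρ : List R} {b q : ℕ} (h : MatchAt w (ρ.drop b) q) :
    MatchAt w ρ (b + q) := by
  unfold MatchAt at h ⊢
  rw [List.drop_drop] at h
  exact h

/-- Greedy decomposition: every string has a `(k,w)`-style decomposition with `k`
dominating all disjoint occurrence families. -/
lemma greedy (w : List R) (hw : 0 < w.length) : ∀ n (ρ : List R), ρ.length ≤ n →
    ∃ k, ∃ v : ℕ → List R,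
      (ρ = v 0 ++ (((List.range k).map fun i => w ++ v (i + 1)).flatten) ∧
        ∀ i ≤ k, ¬ w <:+: v i) ∧ ∀ j, DisjOcc w ρ j → j ≤ k := by
  intro n
  induction n with
  | zero =>
      intro ρ hρ
      have hρnil : ρ = [] := by
        cases ρ with
        | nil => rfl
        | cons a l => simp at hρ
      subst hρnil
      refine ⟨0, fun _ => [], ⟨by simp, ?_⟩, ?_⟩
      · intro i _ hc
        rw [List.infix_nil] at hc
        rw [hc] at hw
        simp at hw
      · rintro j ⟨qs, hlen, _, hq⟩
        cases qs with
        | nil => simp at hlen; omega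
        | cons q qs' =>
            have := (hq q (by simp)).le_length hw
            rw [List.length_nil] at this
            omega
  | succ n ih =>
      intro ρ hρ
      by_cases hinf : w <:+: ρ
      · -- first occurrence
        have hex : ∃ q, MatchAt w ρ q := infix_exists_matchAt hinf
        let q₀ := Nat.find hex
        have hq₀ : MatchAt w ρ q₀ := Nat.find_spec hex
        have hmin : ∀ q < q₀, ¬ MatchAt w ρ q := fun q hq => Nat.find_min hex hq
        set s := ρ.take q₀ with hs
        set t := ρ.drop (q₀ + w.length) with ht
        have hdec : ρ = s ++ w ++ t := matchAt_decomp hq₀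
        have hq₀le : q₀ + w.length ≤ ρ.length := hq₀.le_length hw
        have hslen : s.length = q₀ := by
          rw [hs, List.length_take]; omega
        have htlen : t.length ≤ n := by
          rw [ht, List.length_drop]; omega
        obtain ⟨k, v, ⟨hvdec, hvcon⟩, hvmax⟩ := ih t htlen
        refine ⟨k + 1, fun j => match j with | 0 => s | (j + 1) => v j, ⟨?_, ?_⟩, ?_⟩
        · show ρ = s ++ _
          rw [List.range_succ_eq_map, List.map_cons, List.flatten_cons, List.map_map]
          have hcomp : ((fun i => w ++ (match i + 1 with | 0 => s | (j+1) => v j)) ∘ Nat.succ)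
              = fun i => w ++ v (i + 1) := by
            funext i; rfl
          rw [hcomp]
          show ρ = s ++ ((w ++ v 0) ++ _)
          rw [hdec, hvdec]
          simp [List.append_assoc]
        · intro i hi
          match i with
          | 0 =>
              show ¬ w <:+: s
              intro hc
              obtain ⟨q, hq⟩ := infix_exists_matchAt hc
              have hql : q + w.length ≤ s.length := hq.le_length hw
              have : MatchAt w ρ q :=
                matchAt_of_prefix (hs ▸ List.take_prefix _ _) hql hq
              exact hmin q (by omega) this
          | (i + 1) =>
              exact hvcon i (by omega)
        · rintro j ⟨qs, hlen, hchain, hq⟩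
          cases qs with
          | nil => simp at hlen; omega
          | cons q₁ rest =>
              have hpair : rest.Pairwise (fun a b => a + w.length ≤ b) ∧
                  ∀ b ∈ rest, q₁ + w.length ≤ b := by
                haveI : IsTrans ℕ (fun a b => a + w.length ≤ b) :=
                  ⟨fun a b c h1 h2 => by omega⟩
                have := (List.isChain_iff_pairwise
                  (R := fun a b : ℕ => a + w.length ≤ b)).mp hchain
                rw [List.pairwise_cons] at this
                exact ⟨this.2, this.1⟩
              have hq₁ : q₀ ≤ q₁ := by
                by_contra hc
                exact hmin q₁ (by omega) (hq q₁ (by simp))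
              have hrest : DisjOcc w t (rest.map (fun q => q - (q₀ + w.length))).length := by
                refine ⟨rest.map (fun q => q - (q₀ + w.length)), rfl, ?_, ?_⟩
                · apply List.Pairwise.isChain
                  rw [List.pairwise_map]
                  have h2 : rest.Pairwise (fun a b : ℕ => q₀ + w.length ≤ a) :=
                    List.pairwise_of_forall_mem_list (fun a ha b hb => by
                      have := hpair.2 a ha; omega)
                  have h3 := hpair.1.and h2
                  exact h3.imp (fun hab => by
                    obtain ⟨h4, h5⟩ := hab
                    omega)
                · intro q hqmem
                  rw [List.mem_map] at hqmem
                  obtain ⟨q', hq', rfl⟩ := hqmem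
                  exact matchAt_drop (by have := hpair.2 q' hq'; omega) (hq q' (by simp [hq']))
              have hle := hvmax _ hrest
              rw [List.length_map] at hle
              simp at hlen
              omega
      · refine ⟨0, fun _ => ρ, ⟨by simp, ?_⟩, ?_⟩
        · intro i hi
          interval_cases i
          exact hinf
        · rintro j ⟨qs, hlen, _, hq⟩
          cases qs with
          | nil => simp at hlen; omega
          | cons q qs' => exact absurd (hq q (by simp)).infix hinf

end AuxStrings
section AuxCyc

variable {R : Type}

lemma ElementaryCycle.pos {w : List R} (hw : ElementaryCycle w) : 0 < w.length := by
  have := hw.1; omega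

lemma cwCyclic_exists {w : List R} (hw : ElementaryCycle w) (ρ : List R) :
    ∃ k, CWCyclic k w ρ ∧ ∀ j, DisjOcc w ρ j → j ≤ k := by
  obtain ⟨k, v, hdec, hmax⟩ := greedy w hw.pos ρ.length ρ le_rfl
  exact ⟨k, ⟨hw, v, hdec.1, hdec.2⟩, hmax⟩

lemma CWCyclic.le_half_length {k : ℕ} {w ρ : List R} (h : CWCyclic k w ρ) :
    2 * k ≤ ρ.length := by
  obtain ⟨hw, v, hdec, -⟩ := h
  have h2 : 2 ≤ w.length := hw.1
  have hl := congrArg List.length hdec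
  rw [List.length_append, List.length_flatten, List.map_map] at hl
  have hsum : 2 * k ≤ ((List.range k).map (List.length ∘ fun i => w ++ v (i + 1))).sum := by
    have hmono : ∀ i ∈ List.range k, 2 ≤ (List.length ∘ fun i => w ++ v (i + 1)) i := by
      intro i _
      simp only [Function.comp, List.length_append]
      omega
    calc 2 * k = ((List.range k).map (fun _ => 2)).sum := by
          rw [List.map_const', List.sum_replicate, List.length_range, smul_eq_mul]
          omega
      _ ≤ _ := List.sum_le_sum hmono
  omega

/-- The maximal cyclicity degree of a string. -/
noncomputable def Mstr (ρ : List R) : ℕ :=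
  Nat.findGreatest (fun k => ∃ w, CWCyclic k w ρ) ρ.length

lemma Mstr_max {k : ℕ} {w ρ : List R} (h : CWCyclic k w ρ) : k ≤ Mstr ρ :=
  Nat.le_findGreatest (by have := h.le_half_length; omega) ⟨w, h⟩

lemma Mstr_spec {ρ : List R} (hρ : ρ ≠ []) : ∃ w, CWCyclic (Mstr ρ) w ρ := by
  obtain ⟨a, ρ', rfl⟩ : ∃ a l, ρ = a :: l := by
    cases ρ with
    | nil => exact absurd rfl hρ
    | cons a l => exact ⟨a, l, rfl⟩
  have helem : ElementaryCycle [a, a] := ⟨by simp, by simp, by simp, by simp⟩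
  obtain ⟨k, hk, -⟩ := cwCyclic_exists helem (a :: ρ')
  have hkle : k ≤ (a :: ρ').length := by have := hk.le_half_length; omega
  have hfg := Nat.findGreatest_spec (P := fun k => ∃ w, CWCyclic k w (a :: ρ'))
    hkle ⟨[a,a], hk⟩
  exact hfg

lemma CCyclic_Mstr {ρ : List R} (hρ : ρ ≠ []) : CCyclic (Mstr ρ) ρ := by
  refine ⟨Mstr_spec hρ, fun c' hc' w' hcw => ?_⟩
  have := Mstr_max hcw
  omega

lemma CCyclic.unique {c₁ c₂ : ℕ} {ρ : List R} (h₁ : CCyclic c₁ ρ) (h₂ : CCyclic c₂ ρ) :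
    c₁ = c₂ := by
  by_contra hne
  rcases Nat.lt_or_ge c₁ c₂ with h | h
  · obtain ⟨w, hw⟩ := h₂.1
    exact h₁.2 c₂ h w hw
  · obtain ⟨w, hw⟩ := h₁.1
    have : c₂ < c₁ := by omega
    exact h₂.2 c₁ this w hw

/-- Suffix trick: a `(m,w)`-decomposition yields a suffix with an exactly
`(c+1,w)`-decomposition, for any `c + 1 ≤ m`. -/
lemma cwc_suffix {m c : ℕ} {w ρ : List R} (h : CWCyclic m w ρ) (hm : c + 1 ≤ m) :
    ∃ ρ', ρ' <:+ ρ ∧ CWCyclic (c + 1) w ρ' := by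
  obtain ⟨hw, v, hdec, hcon⟩ := h
  set e := m - (c + 1) with he
  have hme : m = e + (c + 1) := by omega
  have hsplit : (List.range m).map (fun i => w ++ v (i + 1))
      = (List.range e).map (fun i => w ++ v (i + 1))
        ++ (List.range (c+1)).map (fun i => w ++ v (e + i + 1)) := by
    rw [hme, List.range_add, List.map_append, List.map_map]
    congr 1
  have hρeq : ρ = (v 0 ++ ((List.range e).map (fun i => w ++ v (i + 1))).flatten)
      ++ ((List.range (c+1)).map (fun i => w ++ v (e + i + 1))).flatten := by
    rw [hdec, hsplit, List.flatten_append, List.append_assoc]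
  refine ⟨((List.range (c+1)).map fun i => w ++ v (e + i + 1)).flatten,
    ⟨_, hρeq.symm⟩, ?_⟩
  refine ⟨hw, fun j => match j with | 0 => [] | (j + 1) => v (e + j + 1), ?_, ?_⟩
  · rw [List.nil_append]
  · intro i hi
    match i with
    | 0 =>
        intro hc
        have hc' : w <:+: ([] : List R) := hc
        rw [List.infix_nil] at hc'
        rw [hc'] at hw
        exact absurd hw.1 (by simp)
    | (i' + 1) =>
        exact hcon (e + i' + 1) (by omega)

lemma mem_split_first {a : R} : ∀ {l : List R}, a ∈ l → ∃ u v, l = u ++ a :: v ∧ a ∉ u := by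
  intro l
  induction l with
  | nil => intro h; simp at h
  | cons b l ih =>
      intro h
      by_cases hab : a = b
      · subst hab; exact ⟨[], l, rfl, by simp⟩
      · have hal : a ∈ l := by
          rcases List.mem_cons.mp h with h' | h'
          · exact absurd h' hab
          · exact h'
        obtain ⟨u, v, rfl, hu⟩ := ih hal
        exact ⟨b :: u, v, rfl, by simp [hab, hu]⟩

lemma exists_elementary_infix : ∀ n (σ : List R), σ.length ≤ n → ¬ σ.Nodup →
    ∃ w, ElementaryCycle w ∧ w <:+: σ := by
  intro n
  induction n with
  | zero =>
      intro σ hσ hnd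
      cases σ with
      | nil => exact absurd List.nodup_nil hnd
      | cons a l => simp at hσ
  | succ n ih =>
      intro σ hσ hnd
      cases σ with
      | nil => exact absurd List.nodup_nil hnd
      | cons a l =>
          by_cases hal : a ∈ l
          · obtain ⟨u, v, rfl, hu⟩ := mem_split_first hal
            by_cases hnu : (a :: u).Nodup
            · refine ⟨(a :: u) ++ [a], ⟨?_, ?_, ?_, ?_⟩, ?_⟩
              · simp
              · rw [List.getLast?_concat]; rfl
              · rw [List.dropLast_concat]; exact hnu
              · show ((a :: (u ++ [a])).tail).Nodup
                rw [List.tail_cons, List.nodup_append]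
                rw [List.nodup_cons] at hnu
                refine ⟨hnu.2, List.nodup_singleton a, ?_⟩
                intro x hx
                simp only [List.mem_singleton]
                rintro y rfl hxa
                subst hxa
                exact hnu.1 hx
              · refine ⟨[], v, ?_⟩
                simp
            · obtain ⟨w, hw, hinf⟩ := ih (a :: u) (by simp at hσ ⊢; omega) hnu
              exact ⟨w, hw, hinf.trans ⟨[], a :: v, by simp⟩⟩
          · have hnl : ¬ l.Nodup := by
              intro hlnd
              exact hnd (List.nodup_cons.mpr ⟨hal, hlnd⟩)
            obtain ⟨w, hw, hinf⟩ := ih l (by simp at hσ; omega) hnl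
            exact ⟨w, hw, hinf.trans (List.suffix_cons a l).isInfix⟩

end AuxCyc
section Pigeon

variable {R : Type} [Fintype R]

/-- The finite collection of all candidate elementary cycles. -/
noncomputable def cycFinset (R : Type) [Fintype R] : Finset (List R) :=
  (List.finite_length_le R (Fintype.card R + 1)).toFinset

lemma elementary_mem_cycFinset {w : List R} (hw : ElementaryCycle w) : w ∈ cycFinset R := by
  rw [cycFinset, Set.Finite.mem_toFinset]
  show w.length ≤ Fintype.card R + 1
  have h1 : w.dropLast.Nodup := hw.2.2.1
  have h2 := h1.length_le_card
  have h3 := w.length_dropLast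
  omega

/-- A sufficiently long string admits a high-multiplicity cyclic decomposition. -/
lemma long_string_high_cyclic (c : ℕ) (ρ : List R)
    (hlen : (Fintype.card R + 1) * ((cycFinset R).card * c + 1) ≤ ρ.length) :
    ∃ k w, c + 1 ≤ k ∧ CWCyclic k w ρ := by
  set L := Fintype.card R + 1 with hL
  set m := (cycFinset R).card * c + 1 with hm
  have hwin : ∀ i, i < m → ∃ w, ElementaryCycle w ∧ w <:+: (ρ.drop (i * L)).take L := by
    intro i hi
    have hiL : (i + 1) * L ≤ m * L := Nat.mul_le_mul_right L (by omega)
    have hlenwin : ((ρ.drop (i * L)).take L).length = L := by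
      rw [List.length_take, List.length_drop]
      have : m * L ≤ ρ.length := by rw [Nat.mul_comm]; exact hlen
      have : (i + 1) * L ≤ ρ.length := le_trans hiL this
      rw [Nat.add_mul, Nat.one_mul] at this
      omega
    apply exists_elementary_infix ((ρ.drop (i * L)).take L).length _ le_rfl
    intro hnd
    have := hnd.length_le_card
    rw [hlenwin] at this
    omega
  classical
  set wsel : ℕ → List R := fun i => if h : i < m then (hwin i h).choose else [] with hwsel
  have hmapsto : ∀ i ∈ Finset.range m, wsel i ∈ cycFinset R := by
    intro i hi
    rw [Finset.mem_range] at hi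
    simp only [hwsel, dif_pos hi]
    exact elementary_mem_cycFinset (hwin i hi).choose_spec.1
  have hcard : (cycFinset R).card * c < (Finset.range m).card := by
    rw [Finset.card_range]; omega
  obtain ⟨w, hwW, hfib⟩ :=
    Finset.exists_lt_card_fiber_of_mul_lt_card_of_maps_to hmapsto hcard
  set T := (Finset.range m).filter (fun i => wsel i = w) with hT
  have hTmem : ∀ i ∈ T, i < m ∧ wsel i = w := by
    intro i hi
    rw [hT, Finset.mem_filter, Finset.mem_range] at hi
    exact hi
  have hTnonempty : ∃ i₀, i₀ ∈ T := by
    have : 0 < T.card := by omega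
    obtain ⟨i₀, hi₀⟩ := Finset.card_pos.mp this
    exact ⟨i₀, hi₀⟩
  obtain ⟨i₀, hi₀⟩ := hTnonempty
  have hwelem : ElementaryCycle w := by
    obtain ⟨hi₀m, hw0⟩ := hTmem i₀ hi₀
    rw [← hw0]
    simp only [hwsel, dif_pos hi₀m]
    exact (hwin i₀ hi₀m).choose_spec.1
  have hwinf : ∀ i ∈ T, w <:+: (ρ.drop (i * L)).take L := by
    intro i hi
    obtain ⟨him, hwi⟩ := hTmem i hi
    rw [← hwi]
    simp only [hwsel, dif_pos him]
    exact (hwin i him).choose_spec.2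
  -- occurrence offsets inside windows
  set off : ℕ → ℕ := fun i => if h : w <:+: (ρ.drop (i * L)).take L
    then (infix_exists_matchAt h).choose else 0 with hoff
  have hoffspec : ∀ i ∈ T, MatchAt w ((ρ.drop (i * L)).take L) (off i)
      ∧ off i + w.length ≤ L := by
    intro i hi
    have hinf := hwinf i hi
    have hM : MatchAt w ((ρ.drop (i * L)).take L) (off i) := by
      simp only [hoff, dif_pos hinf]
      exact (infix_exists_matchAt hinf).choose_spec
    refine ⟨hM, ?_⟩
    have := hM.le_length hwelem.pos
    have hwl : ((ρ.drop (i * L)).take L).length ≤ L := by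
      rw [List.length_take]; omega
    omega
  have hMatch : ∀ i ∈ T, MatchAt w ρ (i * L + off i) := by
    intro i hi
    obtain ⟨hM, hle⟩ := hoffspec i hi
    have h1 : MatchAt w (ρ.drop (i * L)) (off i) := by
      apply matchAt_of_prefix (List.take_prefix L _) _ hM
      have : ((ρ.drop (i * L)).take L).length ≤ L := by rw [List.length_take]; omega
      have := (hM.le_length hwelem.pos)
      omega
    exact matchAt_of_drop h1
  -- build the disjoint occurrence family
  set sl := T.sort (· ≤ ·) with hsl
  have hsorted : sl.Pairwise (· < ·) := (Finset.sortedLT_sort T).pairwise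
  have hdisj : DisjOcc w ρ (T.card) := by
    refine ⟨sl.map (fun i => i * L + off i), ?_, ?_, ?_⟩
    · rw [List.length_map, hsl, Finset.length_sort]
    · apply List.Pairwise.isChain
      rw [List.pairwise_map]
      refine List.Pairwise.imp_of_mem ?_ hsorted
      intro a b ha hb hab
      have haT : a ∈ T := (Finset.mem_sort (α := ℕ) (· ≤ ·)).mp (hsl ▸ ha)
      have hbT : b ∈ T := (Finset.mem_sort (α := ℕ) (· ≤ ·)).mp (hsl ▸ hb)
      have h1 : off a + w.length ≤ L := (hoffspec a haT).2
      have h2 : (a + 1) * L ≤ b * L := Nat.mul_le_mul_right L (by omega)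
      rw [Nat.add_mul, Nat.one_mul] at h2
      omega
    · intro q hq
      rw [List.mem_map] at hq
      obtain ⟨i, hiT, rfl⟩ := hq
      exact hMatch i ((Finset.mem_sort (α := ℕ) (· ≤ ·)).mp (hsl ▸ hiT))
  obtain ⟨k, hk, hmax⟩ := cwCyclic_exists hwelem ρ
  exact ⟨k, w, le_trans (by omega) (hmax _ hdisj), hk⟩

end Pigeon
section LeavesClassify

namespace RT

variable {R : Type} {ar : R → ℕ}

/-- The finset of leaf positions of a tree. -/
def leaves : RT R ar → Finset (List ℕ)
  | node r ts =>
      if _ : ar r = 0 then {[]}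
      else Finset.univ.biUnion (fun i : Fin (ar r) => (leaves (ts i)).image (fun p => (i : ℕ) :: p))

lemma mem_leaves_iff : ∀ {d : RT R ar} {p : List ℕ}, p ∈ leaves d ↔ LeafAt d p := by
  intro d
  induction d with
  | node r ts ih =>
      intro p
      constructor
      · intro hp
        rw [leaves] at hp
        split at hp
        · rename_i h0
          rw [Finset.mem_singleton] at hp
          subst hp
          exact ⟨node r ts, by simp, h0⟩
        · rw [Finset.mem_biUnion] at hp
          obtain ⟨i, -, hp⟩ := hp
          rw [Finset.mem_image] at hp
          obtain ⟨p', hp', rfl⟩ := hp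
          obtain ⟨t, hsub, h0⟩ := (ih i).mp hp'
          refine ⟨t, ?_, h0⟩
          rw [subAt_cons, dif_pos i.2]
          rw [Fin.eta]
          exact hsub
      · rintro ⟨t, hsub, h0⟩
        cases p with
        | nil =>
            simp at hsub
            subst hsub
            rw [leaves]
            split
            · simp
            · rename_i h1
              exact absurd h0 h1
        | cons i p' =>
            rw [subAt_cons] at hsub
            split at hsub
            · rename_i hlt
              rw [leaves]
              split
              · rename_i h1; omega
              · rw [Finset.mem_biUnion]
                refine ⟨⟨i, hlt⟩, Finset.mem_univ _, ?_⟩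
                rw [Finset.mem_image]
                exact ⟨p', (ih _).mpr ⟨t, hsub, h0⟩, rfl⟩
            · exact absurd hsub (by simp)

lemma leaves_nonempty : ∀ d : RT R ar, (leaves d).Nonempty := by
  intro d
  induction d with
  | node r ts ih =>
      rw [leaves]
      split
      · exact ⟨[], by simp⟩
      · rename_i h0
        have hpos : 0 < ar r := Nat.pos_of_ne_zero h0
        obtain ⟨p', hp'⟩ := ih ⟨0, hpos⟩
        refine ⟨(0 : ℕ) :: p', ?_⟩
        rw [Finset.mem_biUnion]
        exact ⟨⟨0, hpos⟩, Finset.mem_univ _, Finset.mem_image.mpr ⟨p', hp', rfl⟩⟩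

lemma seqTo_isSome_of_subAt : ∀ {p : List ℕ} {d t : RT R ar},
    subAt d p = some t → ∃ ρ, seqTo d p = some ρ := by
  intro p
  induction p with
  | nil =>
      intro d t _
      cases d with
      | node r ts => exact ⟨[r], rfl⟩
  | cons i p ih =>
      intro d t h
      cases d with
      | node r ts =>
          rw [subAt_cons] at h
          split at h
          · rename_i hlt
            obtain ⟨ρ, hρ⟩ := ih h
            refine ⟨r :: ρ, ?_⟩
            rw [seqTo_cons, dif_pos hlt, hρ]
            rfl
          · exact absurd h (by simp)

lemma exists_leaf_deep : ∀ d : RT R ar, ∃ p ∈ leaves d, height d ≤ p.length := by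
  intro d
  induction d with
  | node r ts ih =>
      by_cases h0 : ar r = 0
      · refine ⟨[], ?_, ?_⟩
        · rw [leaves]; simp [h0]
        · rw [height]
          have : (Finset.univ : Finset (Fin (ar r))) = ∅ := by
            rw [Finset.univ_eq_empty_iff]
            rw [h0]
            exact Fin.isEmpty'
          rw [this, Finset.sup_empty]
          simp
      · have hne : (Finset.univ : Finset (Fin (ar r))).Nonempty :=
          ⟨⟨0, Nat.pos_of_ne_zero h0⟩, Finset.mem_univ _⟩
        obtain ⟨i, -, hi⟩ := Finset.exists_mem_eq_sup Finset.univ hne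
          (fun i => height (ts i) + 1)
        obtain ⟨p', hp', hlen⟩ := ih i
        refine ⟨(i : ℕ) :: p', ?_, ?_⟩
        · rw [leaves]
          split
          · omega
          · rw [Finset.mem_biUnion]
            exact ⟨i, Finset.mem_univ _, Finset.mem_image.mpr ⟨p', hp', rfl⟩⟩
        · rw [height, hi]
          simp only [List.length_cons]
          omega

variable [Fintype R]

/-- Maximal arity. -/
noncomputable def maxAr (R : Type) [Fintype R] (ar : R → ℕ) : ℕ := Finset.univ.sup ar

lemma size_le_pow_height (d : RT R ar) :
    size d ≤ (maxAr R ar + 1) ^ (height d + 1) := by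
  induction d with
  | node r ts ih =>
      set A := maxAr R ar with hA
      set H := height (node r ts) with hH
      have hchild : ∀ i, height (ts i) + 1 ≤ H := by
        intro i
        rw [hH, height]
        exact Finset.le_sup (f := fun i => height (ts i) + 1) (Finset.mem_univ i)
      have hsum : ∑ i, size (ts i) ≤ ar r * (A + 1) ^ H := by
        calc ∑ i, size (ts i) ≤ ∑ _i : Fin (ar r), (A + 1) ^ H := by
              apply Finset.sum_le_sum
              intro i _
              calc size (ts i) ≤ (A + 1) ^ (height (ts i) + 1) := ih i
                _ ≤ (A + 1) ^ H := Nat.pow_le_pow_right (by omega) (hchild i)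
          _ = ar r * (A + 1) ^ H := by
              rw [Finset.sum_const, Finset.card_univ, Fintype.card_fin, smul_eq_mul]
      have hars : ar r ≤ A := Finset.le_sup (Finset.mem_univ r)
      have hpow : 1 ≤ (A + 1) ^ H := Nat.one_le_pow _ _ (by omega)
      calc size (node r ts) = 1 + ∑ i, size (ts i) := size_node r ts
        _ ≤ 1 + A * (A + 1) ^ H := by
            have : ar r * (A + 1) ^ H ≤ A * (A + 1) ^ H := Nat.mul_le_mul_right _ hars
            omega
        _ ≤ (A + 1) ^ (H + 1) := by
            rw [pow_succ, Nat.mul_comm ((A+1)^H) (A+1)]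
            have : (A + 1) * (A + 1) ^ H = (A + 1) ^ H + A * (A + 1) ^ H := by ring
            omega

lemma finite_size_le (n : ℕ) : {d : RT R ar | size d ≤ n}.Finite := by
  induction n with
  | zero =>
      apply Set.Finite.subset Set.finite_empty
      intro d hd
      have := one_le_size d
      simp at hd
      omega
  | succ n ih =>
      haveI := ih.to_subtype
      set F : (Σ r : R, (Fin (ar r) → ↥{d : RT R ar | size d ≤ n})) → RT R ar :=
        fun x => node x.1 (fun i => (x.2 i).1) with hF
      apply Set.Finite.subset (Set.finite_range F)
      intro d hd
      cases d with
      | node r ts =>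
          have hbound : ∀ i, size (ts i) ≤ n := by
            intro i
            have h1 : size (ts i) ≤ ∑ j, size (ts j) :=
              Finset.single_le_sum (f := fun j => size (ts j)) (fun j _ => Nat.zero_le _)
                (Finset.mem_univ i)
            have h2 : size (node r ts) = 1 + ∑ j, size (ts j) := size_node r ts
            simp only [Set.mem_setOf_eq] at hd
            omega
          exact ⟨⟨r, fun i => ⟨ts i, hbound i⟩⟩, rfl⟩

/-- Maximal leaf-cyclicity of a tree. -/
noncomputable def cmax (d : RT R ar) : ℕ :=
  (leaves d).sup (fun p => Mstr ((seqTo d p).getD []))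

lemma treeC_cmax (d : RT R ar) : TreeC (cmax d) d := by
  constructor
  · obtain ⟨p, hp, hpsup⟩ := Finset.exists_mem_eq_sup (leaves d) (leaves_nonempty d)
      (fun p => Mstr ((seqTo d p).getD []))
    have hleaf : LeafAt d p := mem_leaves_iff.mp hp
    obtain ⟨t, hsub, h0⟩ := hleaf
    obtain ⟨ρ, hρ⟩ := seqTo_isSome_of_subAt hsub
    have hρne : ρ ≠ [] := by
      intro hc
      have := seqTo_length hρ
      rw [hc] at this
      simp at this
    refine ⟨p, mem_leaves_iff.mp hp, ρ, hρ, ?_⟩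
    have hgd : (seqTo d p).getD [] = ρ := by rw [hρ]; rfl
    show CCyclic (cmax d) ρ
    unfold cmax
    rw [hpsup, hgd]
    exact CCyclic_Mstr hρne
  · intro c' hc' p hlc
    obtain ⟨hleaf, ρ, hρ, hcyc⟩ := hlc
    have hp : p ∈ leaves d := mem_leaves_iff.mpr hleaf
    have hρne : ρ ≠ [] := by
      intro hc
      have := seqTo_length hρ
      rw [hc] at this
      simp at this
    have h1 : Mstr ρ ≤ cmax d := by
      unfold cmax
      have hgd : (seqTo d p).getD [] = ρ := by rw [hρ]; rfl
      have h2 := Finset.le_sup (f := fun p => Mstr ((seqTo d p).getD [])) hp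
      rw [hgd] at h2
      exact h2
    have h3 : c' = Mstr ρ := hcyc.unique (CCyclic_Mstr hρne)
    omega

lemma treeC_unique {c₁ c₂ : ℕ} {d : RT R ar} (h₁ : TreeC c₁ d) (h₂ : TreeC c₂ d) :
    c₁ = c₂ := by
  by_contra hne
  rcases Nat.lt_or_ge c₁ c₂ with h | h
  · obtain ⟨p, hp⟩ := h₂.1
    exact h₁.2 c₂ h p hp
  · obtain ⟨p, hp⟩ := h₁.1
    exact h₂.2 c₁ (by omega) p hp

end RT

end LeavesClassify
section CutLemmas

namespace RT

variable {R : Type} {ar : R → ℕ}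

lemma Mstr_le_cmax [Fintype R] {d : RT R ar} {p : List ℕ} {ρ : List R}
    (hp : p ∈ leaves d) (hρ : seqTo d p = some ρ) : Mstr ρ ≤ cmax d := by
  unfold cmax
  have hgd : (seqTo d p).getD [] = ρ := by rw [hρ]; rfl
  have h2 := Finset.le_sup (f := fun p => Mstr ((seqTo d p).getD [])) hp
  rw [hgd] at h2
  exact h2

lemma replaceAt_replaceAt : ∀ {p : List ℕ} {d t : RT R ar} (x y : RT R ar),
    subAt d p = some t → replaceAt (replaceAt d p x) p y = replaceAt d p y := by
  intro p
  induction p with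
  | nil => intro d t x y _; simp
  | cons i p ih =>
      intro d t x y h
      cases d with
      | node r ts =>
          rw [subAt_cons] at h
          split at h
          · rename_i hlt
            rw [replaceAt_cons, replaceAt_cons, replaceAt_cons]
            congr 1
            funext j
            by_cases hj : j.1 = i
            · have hj' : j = ⟨i, hlt⟩ := Fin.ext hj
              subst hj'
              simp only [if_pos hj]
              exact ih x y h
            · simp only [if_neg hj]
          · exact absurd h (by simp)

lemma replaceAt_inj {p : List ℕ} {d t : RT R ar} {x y : RT R ar}
    (h : subAt d p = some t) (hxy : replaceAt d p x = replaceAt d p y) : x = y := by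
  have h1 := subAt_replaceAt_self x h
  have h2 := subAt_replaceAt_self y h
  rw [hxy, h2] at h1
  exact Option.some.inj h1.symm

end RT

lemma CutW.size_lt {R : Type} {ar : R → ℕ} {w : List R} {d d' : RT R ar}
    (hw : 1 < w.length) (h : CutW w d d') : RT.size d' < RT.size d := by
  obtain ⟨p, q, t, s, hdp, htq, hseq, rfl⟩ := h
  have hlen := RT.seqTo_length hseq
  have hq : q ≠ [] := by
    intro hc; subst hc
    simp at hlen
    omega
  have hst : RT.size s < RT.size t := RT.size_lt_of_subAt htq hq
  have h1 := RT.size_replaceAt s hdp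
  have h2 := RT.size_le_of_subAt hdp
  omega

lemma cotreesW_size_lt {R : Type} {ar : R → ℕ} {w : List R} {d d' : RT R ar}
    (hw : 1 < w.length) (h : d' ∈ cotreesW w d) : RT.size d' < RT.size d := by
  induction h with
  | single h1 => exact h1.size_lt hw
  | tail _ h2 ih => exact lt_trans (h2.size_lt hw) ih

lemma cotreesW_finite {R : Type} [Fintype R] {ar : R → ℕ} {w : List R} (d : RT R ar)
    (hw : 1 < w.length) : (cotreesW w d).Finite := by
  apply Set.Finite.subset (RT.finite_size_le (ar := ar) (RT.size d))
  intro d' hd'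
  exact le_of_lt (cotreesW_size_lt hw hd')

section WSCut

variable {N R : Type} {lhs : R → N} {rhs : R → List N}

lemma CutW.ws {w : List R} {d d' : RT R fun r => (rhs r).length}
    (hwf : w.head? = w.getLast?) (hws : WellSorted lhs rhs d) (h : CutW w d d') :
    WellSorted lhs rhs d' := by
  obtain ⟨p, q, t, s, hdp, htq, hseq, rfl⟩ := h
  have hwt : WellSorted lhs rhs t := hws.subAt_ws hdp
  have hwss : WellSorted lhs rhs s := hwt.subAt_ws htq
  obtain ⟨l, hl⟩ := RT.seqTo_head hseq
  obtain ⟨s', hs'1, hs'2⟩ := RT.seqTo_getLast hseq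
  rw [htq] at hs'1
  have hss' : s' = s := (Option.some.inj hs'1).symm
  rw [hss'] at hs'2
  have hroot : RT.rootRule t = RT.rootRule s := by
    have h1 : w.head? = some (RT.rootRule t) := by rw [hl]; rfl
    rw [hwf, hs'2] at h1
    exact (Option.some.inj h1).symm
  exact hws.replaceAt_ws hdp hwss (by rw [hroot])

lemma cotreesW_ws {w : List R} {d d' : RT R fun r => (rhs r).length}
    (hwf : w.head? = w.getLast?) (hws : WellSorted lhs rhs d) (h : d' ∈ cotreesW w d) :
    WellSorted lhs rhs d' := by
  induction h with
  | single h1 => exact h1.ws hwf hws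
  | tail _ h2 ih => exact h2.ws hwf ih

end WSCut

lemma CutW.lift {R : Type} {ar : R → ℕ} {w : List R} {d t t₁ : RT R ar} {p : List ℕ}
    (hdp : RT.subAt d p = some t) (h : CutW w t t₁) :
    CutW w d (RT.replaceAt d p t₁) := by
  obtain ⟨p₂, q₂, t₂, s₂, h1, h2, h3, rfl⟩ := h
  refine ⟨p ++ p₂, q₂, t₂, s₂, ?_, h2, h3, ?_⟩
  · rw [RT.subAt_append, hdp]
    exact h1
  · exact (RT.replaceAt_append p₂ s₂ hdp).symm

lemma cotreesW_lift {R : Type} {ar : R → ℕ} {w : List R} {d t t' : RT R ar} {p : List ℕ}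
    (hdp : RT.subAt d p = some t) (h : t' ∈ cotreesW w t) :
    RT.replaceAt d p t' ∈ cotreesW w d := by
  induction h with
  | single h1 => exact Relation.TransGen.single (h1.lift hdp)
  | tail _ h2 ih =>
      rename_i b _ _
      have hsub : RT.subAt (RT.replaceAt d p b) p = some b := RT.subAt_replaceAt_self b hdp
      have hstep := h2.lift hsub
      rw [RT.replaceAt_replaceAt _ _ hdp] at hstep
      exact Relation.TransGen.tail ih hstep

lemma cotreesW_subset_cotrees {R : Type} {ar : R → ℕ} {w : List R} {d : RT R ar}
    (hw : ElementaryCycle w) : cotreesW w d ⊆ cotrees d := by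
  intro d' h
  exact Relation.TransGen.mono (by intro a b hab; exact ⟨w, hw, hab⟩) d d' h

lemma cotrees_trans {R : Type} {ar : R → ℕ} {d x y : RT R ar}
    (h1 : x ∈ cotrees d) (h2 : y ∈ cotrees x) : y ∈ cotrees d :=
  Relation.TransGen.trans h1 h2

end CutLemmas
section TRcFin

variable {N R : Type} [Fintype R] {lhs : R → N} {rhs : R → List N}

lemma cmax_le_of_mem {c : ℕ} {d : RT R fun r => (rhs r).length}
    (h : d ∈ TRcset lhs rhs c) : RT.cmax d ≤ c := by
  obtain ⟨-, c', hc', htc⟩ := h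
  have := RT.treeC_unique (RT.treeC_cmax d) htc
  omega

lemma notin_TRcset_cmax {c : ℕ} {d : RT R fun r => (rhs r).length}
    (hws : WellSorted lhs rhs d) (h : d ∉ TRcset lhs rhs c) : c < RT.cmax d := by
  by_contra hc
  exact h ⟨hws, RT.cmax d, by omega, RT.treeC_cmax d⟩

lemma TRcset_finite (c : ℕ) : (TRcset lhs rhs c).Finite := by
  set B := (Fintype.card R + 1) * ((cycFinset R).card * c + 1) with hB
  apply Set.Finite.subset (RT.finite_size_le (ar := fun r => (rhs r).length)
    ((RT.maxAr R (fun r => (rhs r).length) + 1) ^ (B + 1)))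
  intro d hd
  simp only [Set.mem_setOf_eq]
  obtain ⟨p, hp, hdeep⟩ := RT.exists_leaf_deep d
  obtain ⟨t, hsub, -⟩ := RT.mem_leaves_iff.mp hp
  obtain ⟨ρ, hρ⟩ := RT.seqTo_isSome_of_subAt hsub
  have hplen : ρ.length = p.length + 1 := RT.seqTo_length hρ
  have hcm : RT.cmax d ≤ c := cmax_le_of_mem hd
  have hMle : Mstr ρ ≤ c := le_trans (RT.Mstr_le_cmax hp hρ) hcm
  have hshort : ρ.length < B := by
    by_contra hlong
    push_neg at hlong
    obtain ⟨k, w, hk, hcw⟩ := long_string_high_cyclic c ρ (hB ▸ hlong)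
    have := Mstr_max hcw
    omega
  have hheight : RT.height d + 1 ≤ B + 1 := by omega
  exact le_trans (RT.size_le_pow_height d) (Nat.pow_le_pow_right (by omega) hheight)

/-- A well-sorted tree outside `T_R^{(c)}` has a subtree with an exactly
`(c+1,w)`-cyclic leaf. -/
lemma exists_qualifying_subtree {c : ℕ} {d : RT R fun r => (rhs r).length}
    (hws : WellSorted lhs rhs d) (hnot : d ∉ TRcset lhs rhs c) :
    ∃ (p₁ : List ℕ) (t : RT R fun r => (rhs r).length) (w : List R),
      RT.subAt d p₁ = some t ∧ WellSorted lhs rhs t ∧ ElementaryCycle w ∧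
      (∃ q, LeafCW (c + 1) w t q) := by
  have hcm := notin_TRcset_cmax hws hnot
  obtain ⟨p, hp, hpsup⟩ := Finset.exists_mem_eq_sup (RT.leaves d) (RT.leaves_nonempty d)
      (fun p => Mstr ((RT.seqTo d p).getD []))
  obtain ⟨tl, hsub, h0⟩ := RT.mem_leaves_iff.mp hp
  obtain ⟨ρ, hρ⟩ := RT.seqTo_isSome_of_subAt hsub
  have hgd : (RT.seqTo d p).getD [] = ρ := by rw [hρ]; rfl
  have hM : c + 1 ≤ Mstr ρ := by
    have hcm2 : RT.cmax d = Mstr ρ := by unfold RT.cmax; rw [hpsup, hgd]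
    omega
  have hplen : ρ.length = p.length + 1 := RT.seqTo_length hρ
  have hρne : ρ ≠ [] := by
    intro hc; rw [hc] at hplen; simp at hplen
  obtain ⟨w, hw⟩ := Mstr_spec hρne
  obtain ⟨ρ', hsuf, hcw'⟩ := cwc_suffix hw hM
  obtain ⟨pre, hpre⟩ := hsuf
  set k := pre.length with hkdef
  have hρ'len : 1 ≤ ρ'.length := by
    have := hcw'.le_half_length
    omega
  have hk : k ≤ p.length := by
    have hl := congrArg List.length hpre
    rw [List.length_append] at hl
    omega
  obtain ⟨t, ht1, ht2⟩ := RT.subpath k hρ hk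
  have hdrop : ρ.drop k = ρ' := by
    rw [← hpre, hkdef]
    exact List.drop_left
  refine ⟨p.take k, t, w, ht1, hws.subAt_ws ht1, hcw'.1, p.drop k, ?_, ρ', ?_, hcw'⟩
  · have happ := RT.subAt_append d (p.take k) (p.drop k)
    rw [List.take_append_drop, ht1] at happ
    have : RT.subAt t (p.drop k) = some tl := by
      rw [hsub] at happ
      exact happ.symm
    exact ⟨tl, this, h0⟩
  · rw [ht2, hdrop]

end TRcFin
section WeightLift

variable {K : Type} [AddCommMonoid K] {N R : Type} {lhs : R → N} {rhs : R → List N}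
variable {Ω : ∀ n : ℕ, Set ((Fin n → K) → K)}

lemma omega_sum_update {n : ℕ} {ω : (Fin n → K) → K} (hΩd : DistributiveOps Ω)
    (hω : ω ∈ Ω n) (x : Fin n → K) (i : Fin n) {J : Type} (s : Finset J) (g : J → K) :
    ω (Function.update x i (∑ j ∈ s, g j)) = ∑ j ∈ s, ω (Function.update x i (g j)) := by
  classical
  induction s using Finset.induction_on with
  | empty =>
      simp only [Finset.sum_empty]
      exact (hΩd n ω hω).2 _ ⟨i, by simp⟩
  | insert _ _ hj ih =>
      rename_i a s'
      rw [Finset.sum_insert hj, Finset.sum_insert hj, (hΩd n ω hω).1 x i, ih]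

lemma wtval_node (wt : ∀ r : R, (Fin (rhs r).length → K) → K) (r : R)
    (ts : Fin (rhs r).length → RT R fun r => (rhs r).length) :
    wtval wt (RT.node r ts) = wt r (fun j => wtval wt (ts j)) := rfl

lemma wtval_lift {wt : ∀ r : R, (Fin (rhs r).length → K) → K}
    (hΩd : DistributiveOps Ω) (hwt : ∀ r : R, wt r ∈ Ω (rhs r).length) :
    ∀ {p : List ℕ} {d t : RT R fun r => (rhs r).length}, RT.subAt d p = some t →
    ∀ {J : Type} (s : Finset J) (g : J → RT R fun r => (rhs r).length),
      (wtval wt t + ∑ j ∈ s, wtval wt (g j) = ∑ j ∈ s, wtval wt (g j)) →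
      (wtval wt d + ∑ j ∈ s, wtval wt (RT.replaceAt d p (g j))
        = ∑ j ∈ s, wtval wt (RT.replaceAt d p (g j))) := by
  intro p
  induction p with
  | nil =>
      intro d t h J s g hsum
      simp only [RT.subAt_nil, Option.some.injEq] at h
      subst h
      simpa using hsum
  | cons i p ih =>
      intro d t h J s g hsum
      cases d with
      | node r ts =>
          rw [RT.subAt_cons] at h
          split at h
          · rename_i hlt
            have IH := ih h s g hsum
            set x₀ : Fin (rhs r).length → K := fun j => wtval wt (ts j) with hx₀
            set b : J → K := fun j => wtval wt (RT.replaceAt (ts ⟨i, hlt⟩) p (g j)) with hb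
            have hrepl : ∀ x : RT R fun r => (rhs r).length,
                wtval wt (RT.replaceAt (RT.node r ts) (i :: p) x)
                = wt r (Function.update x₀ ⟨i, hlt⟩
                    (wtval wt (RT.replaceAt (ts ⟨i, hlt⟩) p x))) := by
              intro x
              rw [RT.replaceAt_cons, wtval_node]
              congr 1
              funext j
              by_cases hj : j = ⟨i, hlt⟩
              · subst hj
                rw [Function.update_self]
                rw [if_pos rfl]
              · rw [Function.update_of_ne hj, if_neg (fun hc => hj (Fin.ext hc))]
            have hd : wtval wt (RT.node r ts) = wt r (Function.update x₀ ⟨i, hlt⟩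
                (wtval wt (ts ⟨i, hlt⟩))) := by
              rw [wtval_node]
              congr 1
              exact (Function.update_eq_self _ _).symm
            calc wtval wt (RT.node r ts)
                  + ∑ j ∈ s, wtval wt (RT.replaceAt (RT.node r ts) (i :: p) (g j))
                = wt r (Function.update x₀ ⟨i, hlt⟩ (wtval wt (ts ⟨i, hlt⟩)))
                  + ∑ j ∈ s, wt r (Function.update x₀ ⟨i, hlt⟩ (b j)) := by
                  rw [← hd]
                  congr 1
                  apply Finset.sum_congr rfl
                  intro j _
                  rw [hrepl (g j)]
              _ = wt r (Function.update x₀ ⟨i, hlt⟩ (wtval wt (ts ⟨i, hlt⟩)))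
                  + wt r (Function.update x₀ ⟨i, hlt⟩ (∑ j ∈ s, b j)) := by
                  rw [omega_sum_update hΩd (hwt r)]
              _ = wt r (Function.update x₀ ⟨i, hlt⟩ (wtval wt (ts ⟨i, hlt⟩) + ∑ j ∈ s, b j)) := by
                  rw [(hΩd _ (wt r) (hwt r)).1 x₀ ⟨i, hlt⟩]
              _ = wt r (Function.update x₀ ⟨i, hlt⟩ (∑ j ∈ s, b j)) := by
                  rw [IH]
              _ = ∑ j ∈ s, wt r (Function.update x₀ ⟨i, hlt⟩ (b j)) := by
                  rw [omega_sum_update hΩd (hwt r)]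
              _ = ∑ j ∈ s, wtval wt (RT.replaceAt (RT.node r ts) (i :: p) (g j)) := by
                  apply Finset.sum_congr rfl
                  intro j _
                  rw [hrepl (g j)]
          · exact absurd h (by simp)

end WeightLift
section InfSumLemmas

variable {K : Type} [AddCommMonoid K]

lemma InfSum.isum_equiv (S : InfSum K) {I J : Type} [Countable I] [Countable J]
    (e : I ≃ J) (f : J → K) : S.isum (fun i => f (e i)) = S.isum f := by
  rw [S.isum_partition (fun i => f (e i)) (fun i => e i)]
  have hinner : (fun j : J => S.isum fun i : {i : I // e i = j} => f (e i.1)) = f := by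
    funext j
    have hj : ∀ x : {i : I // e i = j}, x = ⟨e.symm j, e.apply_symm_apply j⟩ := by
      intro x
      apply Subtype.ext
      apply e.injective
      rw [x.2, e.apply_symm_apply]
    rw [S.isum_single _ _ hj]
    simp
  rw [hinner]

lemma InfSum.isum_remove (S : InfSum K) {α : Type} [Countable α] (E : Set α) (d₀ : α)
    (hd₀ : d₀ ∈ E) (f : α → K) :
    S.isum (fun x : ↥E => f x.1) = f d₀ + S.isum (fun x : ↥(E \ {d₀}) => f x.1) := by
  classical
  rw [S.isum_partition (fun x : ↥E => f x.1) (fun x => decide (x.1 = d₀))]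
  rw [S.isum_pair _ true false (by simp) (fun b => by cases b <;> simp)]
  congr 1
  · have hj : ∀ x : {x : ↥E // decide (x.1 = d₀) = true},
        x = ⟨⟨d₀, hd₀⟩, by simp⟩ := by
      intro x
      have hx : x.1.1 = d₀ := by have := x.2; simpa using this
      apply Subtype.ext; apply Subtype.ext; exact hx
    rw [S.isum_single _ _ hj]
  · rw [← S.isum_equiv
        (⟨fun x => ⟨x.1.1, x.1.2, by simpa using x.2⟩,
          fun y => ⟨⟨y.1, y.2.1⟩, by simpa using y.2.2⟩,
          fun x => by apply Subtype.ext; apply Subtype.ext; rfl,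
          fun y => by apply Subtype.ext; rfl⟩ :
          {x : ↥E // decide (x.1 = d₀) = false} ≃ ↥(E \ {d₀}))
        (fun y : ↥(E \ {d₀}) => f y.1)]
    rfl

lemma absorb_finset_sum {J : Type} {F : K} {s : Finset J} {g : J → K}
    (h : ∀ j ∈ s, F + g j = F) : F + ∑ j ∈ s, g j = F := by
  classical
  induction s using Finset.induction_on with
  | empty => simp
  | insert _ _ hj ih =>
      rename_i a s'
      rw [Finset.sum_insert hj, ← add_assoc]
      rw [show F + g a = F from h a (by simp)]
      exact ih (fun j hjm => h j (by simp [hjm]))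

end InfSumLemmas

section MainAbsorb

variable {N R K : Type} [Fintype R] [AddCommMonoid K]
variable {lhs : R → N} {rhs : R → List N}
variable {Ω : ∀ n : ℕ, Set ((Fin n → K) → K)}
variable {wt : ∀ r : R, (Fin (rhs r).length → K) → K}

lemma absorb_lemma (hΩd : DistributiveOps Ω) (hwt : ∀ r, wt r ∈ Ω (rhs r).length)
    (c : ℕ) (hclosed : CClosed lhs rhs wt c)
    (D : Set (RT R fun r => (rhs r).length)) (hDsub : D ⊆ TRcset lhs rhs c) :
    ∀ n (d : RT R fun r => (rhs r).length), RT.size d ≤ n →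
      WellSorted lhs rhs d → d ∉ TRcset lhs rhs c →
      (cotrees d ∩ TRcset lhs rhs c ⊆ D) →
      (∑ᶠ x ∈ D, wtval wt x) + wtval wt d = (∑ᶠ x ∈ D, wtval wt x) := by
  have hDfin : D.Finite := (TRcset_finite c).subset hDsub
  have hF : (∑ᶠ x ∈ D, wtval wt x) = ∑ x ∈ hDfin.toFinset, wtval wt x := by
    have h := finsum_mem_coe_finset (s := hDfin.toFinset) (f := fun x => wtval wt x)
    rw [Set.Finite.coe_toFinset] at h
    exact h
  intro n
  induction n with
  | zero =>
      intro d hsz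
      have := RT.one_le_size d
      omega
  | succ n ih =>
      intro d hsz hws hnot hco
      obtain ⟨p₁, t, w, hp₁, hwst, hwelem, hqual⟩ := exists_qualifying_subtree hws hnot
      have hwlen : 1 < w.length := hwelem.1
      have hcloseq := hclosed t hwst w hwelem hqual
      have hfin : (cotreesW w t).Finite := cotreesW_finite t hwlen
      have hconvS : (∑ᶠ d' ∈ cotreesW w t, wtval wt d') = ∑ d' ∈ hfin.toFinset, wtval wt d' := by
        have h := finsum_mem_coe_finset (s := hfin.toFinset) (f := fun x => wtval wt x)
        rw [Set.Finite.coe_toFinset] at h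
        exact h
      rw [hconvS] at hcloseq
      have hlift := wtval_lift hΩd hwt hp₁ hfin.toFinset (fun d' => d') hcloseq
      set rep : RT R (fun r => (rhs r).length) → RT R (fun r => (rhs r).length) :=
        fun t' => RT.replaceAt d p₁ t' with hrep
      -- facts about the replaced trees
      have hmemW : ∀ t' ∈ hfin.toFinset, rep t' ∈ cotreesW w d := by
        intro t' ht'
        rw [Set.Finite.mem_toFinset] at ht'
        exact cotreesW_lift hp₁ ht'
      have hmemco : ∀ t' ∈ hfin.toFinset, rep t' ∈ cotrees d := by
        intro t' ht'
        exact cotreesW_subset_cotrees hwelem (hmemW t' ht')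
      have hsz' : ∀ t' ∈ hfin.toFinset, RT.size (rep t') ≤ n := by
        intro t' ht'
        have := cotreesW_size_lt hwlen (hmemW t' ht')
        omega
      have hws' : ∀ t' ∈ hfin.toFinset, WellSorted lhs rhs (rep t') := by
        intro t' ht'
        exact cotreesW_ws hwelem.2.1 hws (hmemW t' ht')
      classical
      set Sin := hfin.toFinset.filter (fun t' => rep t' ∈ TRcset lhs rhs c) with hSin
      set Sout := hfin.toFinset.filter (fun t' => rep t' ∉ TRcset lhs rhs c) with hSout
      set A := Sin.image rep with hA
      have hAD : ∀ a ∈ A, a ∈ hDfin.toFinset := by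
        intro a ha
        rw [hA, Finset.mem_image] at ha
        obtain ⟨t', ht', rfl⟩ := ha
        rw [hSin, Finset.mem_filter] at ht'
        rw [Set.Finite.mem_toFinset]
        exact hco ⟨hmemco t' ht'.1, ht'.2⟩
      have hApart : ∑ t' ∈ Sin, wtval wt (rep t') = ∑ a ∈ A, wtval wt a := by
        rw [hA]
        rw [Finset.sum_image]
        intro x hx y hy hxy
        exact RT.replaceAt_inj hp₁ hxy
      have hSplitS : (∑ t' ∈ Sin, wtval wt (rep t')) + (∑ t' ∈ Sout, wtval wt (rep t'))
          = ∑ t' ∈ hfin.toFinset, wtval wt (rep t') := by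
        rw [hSin, hSout]
        exact Finset.sum_filter_add_sum_filter_not _ _ _
      have h2 : wtval wt d
            + ((∑ t' ∈ Sin, wtval wt (rep t')) + (∑ t' ∈ Sout, wtval wt (rep t')))
          = (∑ t' ∈ Sin, wtval wt (rep t')) + (∑ t' ∈ Sout, wtval wt (rep t')) := by
        rw [hSplitS]
        exact hlift
      have h3 : (∑ᶠ x ∈ D, wtval wt x) + (∑ t' ∈ Sout, wtval wt (rep t'))
          = (∑ᶠ x ∈ D, wtval wt x) := by
        apply absorb_finset_sum
        intro t' ht'
        rw [hSout, Finset.mem_filter] at ht'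
        apply ih (rep t') (hsz' t' ht'.1) (hws' t' ht'.1) ht'.2
        intro x hx
        exact hco ⟨cotrees_trans (hmemco t' ht'.1) hx.1, hx.2⟩
      have hAsub : A ⊆ hDfin.toFinset := hAD
      have h1 : (∑ᶠ x ∈ D, wtval wt x)
          = (∑ x ∈ hDfin.toFinset \ A, wtval wt x) + (∑ t' ∈ Sin, wtval wt (rep t')) := by
        rw [hF, hApart]
        exact (Finset.sum_sdiff hAsub).symm
      calc (∑ᶠ x ∈ D, wtval wt x) + wtval wt d
          = ((∑ᶠ x ∈ D, wtval wt x) + (∑ t' ∈ Sout, wtval wt (rep t'))) + wtval wt d := by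
            rw [h3]
        _ = ((∑ x ∈ hDfin.toFinset \ A, wtval wt x) + (∑ t' ∈ Sin, wtval wt (rep t'))
              + (∑ t' ∈ Sout, wtval wt (rep t'))) + wtval wt d := by rw [← h1]
        _ = (∑ x ∈ hDfin.toFinset \ A, wtval wt x)
              + (wtval wt d + ((∑ t' ∈ Sin, wtval wt (rep t'))
                + (∑ t' ∈ Sout, wtval wt (rep t')))) := by abel
        _ = (∑ x ∈ hDfin.toFinset \ A, wtval wt x)
              + ((∑ t' ∈ Sin, wtval wt (rep t')) + (∑ t' ∈ Sout, wtval wt (rep t'))) := by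
            rw [h2]
        _ = ((∑ x ∈ hDfin.toFinset \ A, wtval wt x) + (∑ t' ∈ Sin, wtval wt (rep t')))
              + (∑ t' ∈ Sout, wtval wt (rep t')) := by abel
        _ = (∑ᶠ x ∈ D, wtval wt x) + (∑ t' ∈ Sout, wtval wt (rep t')) := by rw [← h1]
        _ = (∑ᶠ x ∈ D, wtval wt x) := h3

end MainAbsorb
/-- Theorem (outside trees subsumed): in a `c`-closed weighted system, any finite set `B`
of trees outside `T_R^{(c)}` may be removed from the infinitary summation over `D'` as
long as all their at most `c`-cyclic cutout trees remain in the finite summation over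
`D`. -/
theorem outside_trees_subsumed {N R K : Type} [Fintype N] [Nonempty N] [Fintype R]
    [AddCommMonoid K] (lhs : R → N) (rhs : R → List N)
    [Countable (RT R fun r => (rhs r).length)]
    (S : InfSum K) (hdc : S.DComplete)
    (Ω : ∀ n : ℕ, Set ((Fin n → K) → K)) (hΩ0 : HasZeroOps Ω) (hΩd : DistributiveOps Ω)
    (wt : ∀ r : R, (Fin (rhs r).length → K) → K) (hwt : ∀ r : R, wt r ∈ Ω (rhs r).length)
    (c : ℕ) (hclosed : CClosed lhs rhs wt c) :
    ∀ (l : ℕ) (D D' : Set (RT R fun r => (rhs r).length)),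
      D ⊆ TRcset lhs rhs c → D' ⊆ TRset lhs rhs \ TRcset lhs rhs c →
      (∀ d ∈ D', cotrees d ∩ TRcset lhs rhs c ⊆ D) →
      ∀ B : Set (RT R fun r => (rhs r).length), B ⊆ D' → B.Finite → B.ncard = l →
        ((∑ᶠ d ∈ D, wtval wt d) + S.isum fun d : ↥D' => wtval wt d.1)
          = (∑ᶠ d ∈ D, wtval wt d) + S.isum fun d : ↥(D' \ B) => wtval wt d.1 := by
  intro l D D' hD hD' hco B hBD' hBfin hBcard
  clear hBcard
  have key : ∀ B : Set (RT R fun r => (rhs r).length), B.Finite → B ⊆ D' →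
      ((∑ᶠ d ∈ D, wtval wt d) + S.isum fun d : ↥D' => wtval wt d.1)
        = (∑ᶠ d ∈ D, wtval wt d) + S.isum fun d : ↥(D' \ B) => wtval wt d.1 := by
    intro B hBfin
    refine Set.Finite.induction_on (motive := fun B _ => B ⊆ D' →
      ((∑ᶠ d ∈ D, wtval wt d) + S.isum fun d : ↥D' => wtval wt d.1)
        = (∑ᶠ d ∈ D, wtval wt d) + S.isum fun d : ↥(D' \ B) => wtval wt d.1)
      B hBfin ?_ ?_
    · intro _
      rw [Set.diff_empty]
    · intro a s ha hsfin IH hins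
      have hsub' : s ⊆ D' := subset_trans (Set.subset_insert a s) hins
      have haD' : a ∈ D' := hins (Set.mem_insert a s)
      have haE : a ∈ D' \ s := ⟨haD', ha⟩
      have hrm := S.isum_remove (D' \ s) a haE (fun x => wtval wt x)
      have hset : (D' \ s) \ {a} = D' \ insert a s := by
        rw [Set.diff_diff, Set.union_singleton]
      rw [IH hsub', hrm, hset]
      have hws : WellSorted lhs rhs a := (hD' haD').1
      have hnot : a ∉ TRcset lhs rhs c := (hD' haD').2
      have habs := absorb_lemma hΩd hwt c hclosed D hD (RT.size a) a le_rfl hws hnot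
        (hco a haD')
      rw [← add_assoc, habs]
  exact key B hBfin hBD'
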